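/- arXiv:2312.13024 — 2 statements merged into one kernel-verified Lean document; each statement's English description precedes it below -/
import Mathlib

section
/- Let V be a type with an extensional Type-valued relation ∈ (meaning the canonical map (x = y) → ∏ z, (z ∈ x) ≃ (z ∈ y) is an equivalence). For any type A, the type of internalisable representations Σ (f : A → V), Σ (a : V), ∏ (z : V), (z ∈ a) ≃ (Σ x : A, f x = z) is equivalent to the type of internalisations Σ (a : V), (Σ (z : V), z ∈ a) ≃ A. -/
private theorem aux_transport {V : Type*} {mem : V → V → Type*} {a z : V} {m : mem z a}
    (p : Σ w : V, mem w a) (hp : p = ⟨z, m⟩) (h : p.1 = z) : h ▸ p.2 = m := by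
  subst hp
  simp

private def fiberEquiv {V : Type*} {A : Type*} (mem : V → V → Type*) (a : V)
    (e : (Σ z : V, mem z a) ≃ A) (z : V) :
    mem z a ≃ {x : A // (e.symm x).1 = z} where
  toFun m := ⟨e ⟨z, m⟩, by rw [Equiv.symm_apply_apply]⟩
  invFun p := p.2 ▸ (e.symm p.1).2
  left_inv m := aux_transport _ (e.symm_apply_apply _) _
  right_inv p := by
    obtain ⟨x, h⟩ := p
    subst h
    simp [Sigma.eta]

theorem internalisable_representations_equiv_internalisations
    {V : Type*} (mem : V → V → Type*)
    (ext : ∀ x y : V,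
      Function.Bijective
        (fun h : x = y => fun z : V => Equiv.cast (congrArg (mem z) h)))
    (A : Type*) :
    Nonempty ((Σ f : A → V, Σ a : V, ∀ z : V, mem z a ≃ {x : A // f x = z}) ≃
      (Σ a : V, (Σ z : V, mem z a) ≃ A)) := by
  refine ⟨{
    toFun := fun p => ⟨p.2.1, (Equiv.sigmaCongrRight p.2.2).trans (Equiv.sigmaFiberEquiv p.1)⟩
    invFun := fun q => ⟨fun x => (q.2.symm x).1, q.1, fiberEquiv mem q.1 q.2⟩
    left_inv := ?_
    right_inv := ?_ }⟩
  · rintro ⟨f, a, e⟩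
    refine Sigma.ext rfl (heq_of_eq (Sigma.ext rfl (heq_of_eq ?_)))
    funext z
    ext m
    rfl
  · rintro ⟨a, e⟩
    refine Sigma.ext rfl (heq_of_eq ?_)
    ext ⟨z, m⟩
    rfl
end

section
/- Let A be a type, B : A → Type a family, and φ, ψ : ∏ (a : A), B a. Then the identity type φ = ψ is equivalent to the type Σ (e : A ≃ A), ∏ (a : A), (⟨a, φ a⟩ : Σ a, B a) = ⟨e a, ψ (e a)⟩. -/
theorem funext_equiv_graph_equalities
    {A : Type*} {B : A → Type*} (φ ψ : ∀ a : A, B a) :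
    Nonempty ((φ = ψ) ≃
      ((e : A ≃ A) ×' ∀ a : A, (⟨a, φ a⟩ : Σ a : A, B a) = ⟨e a, ψ (e a)⟩)) := by
  constructor
  refine ⟨fun h => ⟨Equiv.refl A, fun a => by subst h; rfl⟩,
    fun ⟨e, h⟩ => funext fun a => ?_, fun _ => rfl, fun ⟨e, h⟩ => ?_⟩
  · have h1 : a = e a := congrArg Sigma.fst (h a)
    have h2 : HEq (φ a) (ψ (e a)) := (Sigma.mk.inj_iff.mp (h a)).2
    rw [← h1] at h2
    exact eq_of_heq h2
  · have he : e = Equiv.refl A := Equiv.ext fun a => (congrArg Sigma.fst (h a)).symm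
    subst he
    rfl
end
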